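/- For real symmetric positive semi-definite matrices A and B, the operator norm of A^{1/2} − B^{1/2} squared is at most the operator norm of A − B, i.e., ‖A^{1/2} − B^{1/2}‖² ≤ ‖A − B‖. -/

import Mathlib

set_option synthInstance.maxHeartbeats 400000
open Classical Matrix

/-- The positive semidefinite square root of a real matrix (junk value `0` if not PSD). -/
noncomputable def psdSqrt {n : ℕ} (A : Matrix (Fin n) (Fin n) ℝ) : Matrix (Fin n) (Fin n) ℝ :=
  if h : A.PosSemidef then
    (h.1.eigenvectorUnitary : Matrix (Fin n) (Fin n) ℝ) *
      diagonal ((↑) ∘ (√·) ∘ h.1.eigenvalues) * (star h.1.eigenvectorUnitary : Matrix (Fin n) (Fin n) ℝ)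
  else 0

noncomputable def Matrix.PosSemidef.sqrt {n : ℕ} {A : Matrix (Fin n) (Fin n) ℝ}
    (_h : A.PosSemidef) : Matrix (Fin n) (Fin n) ℝ := psdSqrt A

lemma Matrix.PosSemidef.posSemidef_sqrt {n : ℕ} {A : Matrix (Fin n) (Fin n) ℝ}
    (h : A.PosSemidef) : h.sqrt.PosSemidef := by
  unfold Matrix.PosSemidef.sqrt psdSqrt
  rw [dif_pos h]
  have hD : (diagonal ((↑) ∘ (√·) ∘ h.1.eigenvalues) : Matrix (Fin n) (Fin n) ℝ).PosSemidef :=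
    posSemidef_diagonal_iff.mpr (fun i => by simp [Real.sqrt_nonneg])
  have := hD.mul_mul_conjTranspose_same (h.1.eigenvectorUnitary : Matrix (Fin n) (Fin n) ℝ)
  simpa [star_eq_conjTranspose] using this

lemma Matrix.PosSemidef.sqrt_mul_self {n : ℕ} {A : Matrix (Fin n) (Fin n) ℝ}
    (h : A.PosSemidef) : h.sqrt * h.sqrt = A := by
  unfold Matrix.PosSemidef.sqrt psdSqrt
  rw [dif_pos h]
  have hU : (star h.1.eigenvectorUnitary : Matrix (Fin n) (Fin n) ℝ) *
      (h.1.eigenvectorUnitary : Matrix (Fin n) (Fin n) ℝ) = 1 :=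
    Unitary.coe_star_mul_self _
  have hspec := h.1.spectral_theorem
  rw [Unitary.conjStarAlgAut_apply] at hspec
  calc _ = (h.1.eigenvectorUnitary : Matrix (Fin n) (Fin n) ℝ) *
        (diagonal ((↑) ∘ (√·) ∘ h.1.eigenvalues) * ((star h.1.eigenvectorUnitary :
          Matrix (Fin n) (Fin n) ℝ) * (h.1.eigenvectorUnitary : Matrix (Fin n) (Fin n) ℝ)) *
        diagonal ((↑) ∘ (√·) ∘ h.1.eigenvalues)) *
        (star h.1.eigenvectorUnitary : Matrix (Fin n) (Fin n) ℝ) := by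
          simp only [mul_assoc]
    _ = A := by
      rw [hU, mul_one, diagonal_mul_diagonal]
      conv_rhs => rw [hspec]
      congr 3
      funext i
      simp [Real.mul_self_sqrt (h.eigenvalues_nonneg i)]

/-- The spectral (operator) norm of a square real matrix, with respect to the
Euclidean norm on `ℝ^n`. -/
noncomputable def opNorm {n : ℕ} (M : Matrix (Fin n) (Fin n) ℝ) : ℝ :=
  ‖Matrix.toEuclideanCLM (𝕜 := ℝ) M‖

private lemma dot_symm_aux {n : ℕ} {C : Matrix (Fin n) (Fin n) ℝ} (hC : C.IsHermitian)
    (x y : Fin n → ℝ) : x ⬝ᵥ (C *ᵥ y) = (C *ᵥ x) ⬝ᵥ y := by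
  have ht : Cᵀ = C := by
    have h := hC.eq
    rw [conjTranspose_eq_transpose_of_trivial] at h
    exact h
  rw [dotProduct_mulVec, ← vecMul_transpose, ht]

private lemma inner_eq_dot_aux {n : ℕ} (x y : EuclideanSpace ℝ (Fin n)) :
    (inner ℝ x y : ℝ) = (⇑x) ⬝ᵥ (⇑y) := by
  rw [EuclideanSpace.inner_eq_star_dotProduct]
  simp [dotProduct, mul_comm]

/-- For real symmetric PSD matrices `A`, `B`:
`‖A^{1/2} − B^{1/2}‖² ≤ ‖A − B‖` in operator norm. -/
theorem opNorm_sqrt_diff_sq_le {n : ℕ}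
    (A B : Matrix (Fin n) (Fin n) ℝ) (hA : A.PosSemidef) (hB : B.PosSemidef) :
    opNorm (psdSqrt A - psdSqrt B) ^ 2 ≤ opNorm (A - B) := by
  have hsA : psdSqrt A = hA.sqrt := rfl
  have hsB : psdSqrt B = hB.sqrt := rfl
  rw [hsA, hsB]
  set C : Matrix (Fin n) (Fin n) ℝ := hA.sqrt - hB.sqrt with hCdef
  have hC : C.IsHermitian := (hA.posSemidef_sqrt.1).sub (hB.posSemidef_sqrt.1)
  set K : ℝ := opNorm (A - B) with hKdef
  have hK0 : 0 ≤ K := norm_nonneg _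
  -- Step 1 : each eigenvalue of C squared is at most K
  have heig : ∀ i : Fin n, (hC.eigenvalues i) ^ 2 ≤ K := by
    intro i
    set v : EuclideanSpace ℝ (Fin n) := hC.eigenvectorBasis i with hvdef
    have hnv : ‖v‖ = 1 := hC.eigenvectorBasis.orthonormal.1 i
    have hvv : (⇑v) ⬝ᵥ (⇑v) = 1 := by
      have h1 : (inner ℝ v v : ℝ) = 1 := by
        rw [real_inner_self_eq_norm_sq, hnv]; norm_num
      rw [inner_eq_dot_aux] at h1; exact h1
    set lam : ℝ := hC.eigenvalues i with hlamdef
    have hCv : C *ᵥ ⇑v = lam • ⇑v := hC.mulVec_eigenvectorBasis i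
    set a : ℝ := (⇑v) ⬝ᵥ (hA.sqrt *ᵥ ⇑v) with hadef
    set b : ℝ := (⇑v) ⬝ᵥ (hB.sqrt *ᵥ ⇑v) with hbdef
    have ha0 : 0 ≤ a := by simpa [hadef] using hA.posSemidef_sqrt.dotProduct_mulVec_nonneg ⇑v
    have hb0 : 0 ≤ b := by simpa [hbdef] using hB.posSemidef_sqrt.dotProduct_mulVec_nonneg ⇑v
    have hlab : lam = a - b := by
      have h2 : (⇑v) ⬝ᵥ (C *ᵥ ⇑v) = lam := by
        rw [hCv]; simp [hvv]
      rw [← h2, hCdef, sub_mulVec, dotProduct_sub]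
    have hfact : hA.sqrt * C + C * hB.sqrt = A - B := by
      rw [hCdef]
      simp only [mul_sub, sub_mul, hA.sqrt_mul_self, hB.sqrt_mul_self]
      abel
    have hkey : (⇑v) ⬝ᵥ ((A - B) *ᵥ ⇑v) = lam * (a + b) := by
      rw [← hfact, add_mulVec, dotProduct_add, ← mulVec_mulVec, ← mulVec_mulVec, hCv,
        dot_symm_aux hC, hCv]
      simp only [mulVec_smul, dotProduct_smul, smul_dotProduct, smul_eq_mul]
      ring
    have habs : |lam * (a + b)| ≤ K := by
      rw [← hkey]
      have h1 : (⇑v) ⬝ᵥ ((A - B) *ᵥ ⇑v)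
          = (inner ℝ v (toEuclideanCLM (𝕜 := ℝ) (A - B) v) : ℝ) := by
        rw [inner_eq_dot_aux]; rfl
      rw [h1]
      calc |(inner ℝ v (toEuclideanCLM (𝕜 := ℝ) (A - B) v) : ℝ)|
          ≤ ‖v‖ * ‖toEuclideanCLM (𝕜 := ℝ) (A - B) v‖ := abs_real_inner_le_norm _ _
        _ ≤ ‖v‖ * (‖toEuclideanCLM (𝕜 := ℝ) (A - B)‖ * ‖v‖) :=
            mul_le_mul_of_nonneg_left
              ((toEuclideanCLM (𝕜 := ℝ) (A - B)).le_opNorm v) (norm_nonneg v)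
        _ = K := by rw [hnv]; simp [hKdef, opNorm]
      -- done
    have h2 : -(K) ≤ lam * (a + b) ∧ lam * (a + b) ≤ K := abs_le.mp habs
    rcases le_total b a with h | h
    · nlinarith [h2.2]
    · nlinarith [h2.1]
  -- Step 2 : bound the operator norm of C using Parseval
  have hbound : ∀ x : EuclideanSpace ℝ (Fin n),
      ‖toEuclideanCLM (𝕜 := ℝ) C x‖ ≤ Real.sqrt K * ‖x‖ := by
    intro x
    have hpars : ∀ y : EuclideanSpace ℝ (Fin n),
        ‖y‖ ^ 2 = ∑ i, (inner ℝ (hC.eigenvectorBasis i) y : ℝ) ^ 2 := by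
      intro y
      have h3 := hC.eigenvectorBasis.sum_inner_mul_inner y y
      rw [real_inner_self_eq_norm_sq] at h3
      rw [← h3]
      refine Finset.sum_congr rfl fun i _ => ?_
      rw [real_inner_comm y, sq]
    have hterm : ∀ i, (inner ℝ (hC.eigenvectorBasis i) (toEuclideanCLM (𝕜 := ℝ) C x) : ℝ)
        = hC.eigenvalues i * (inner ℝ (hC.eigenvectorBasis i) x : ℝ) := by
      intro i
      rw [inner_eq_dot_aux, inner_eq_dot_aux]
      have hTx : ⇑(toEuclideanCLM (𝕜 := ℝ) C x) = C *ᵥ ⇑x := rfl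
      rw [hTx, dot_symm_aux hC, hC.mulVec_eigenvectorBasis i, smul_dotProduct, smul_eq_mul]
    have hsq : ‖toEuclideanCLM (𝕜 := ℝ) C x‖ ^ 2 ≤ K * ‖x‖ ^ 2 := by
      rw [hpars (toEuclideanCLM (𝕜 := ℝ) C x), hpars x, Finset.mul_sum]
      refine Finset.sum_le_sum fun i _ => ?_
      rw [hterm i, mul_pow]
      have := heig i
      nlinarith [sq_nonneg ((inner ℝ (hC.eigenvectorBasis i) x : ℝ))]
    have h4 := Real.sqrt_le_sqrt hsq
    rwa [Real.sqrt_sq (norm_nonneg _), Real.sqrt_mul hK0, Real.sqrt_sq (norm_nonneg _)] at h4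
  have hCle : opNorm C ≤ Real.sqrt K := by
    rw [opNorm]
    exact ContinuousLinearMap.opNorm_le_bound _ (Real.sqrt_nonneg _) hbound
  have h5 : opNorm C ^ 2 ≤ Real.sqrt K ^ 2 := by
    have h6 : (0:ℝ) ≤ opNorm C := norm_nonneg _
    exact pow_le_pow_left₀ h6 hCle 2
  calc opNorm C ^ 2 ≤ Real.sqrt K ^ 2 := h5
    _ = K := Real.sq_sqrt hK0
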